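/- arXiv:1509.03758 — 2 statements merged into one kernel-verified Lean document; each statement's English description precedes it below -/
import Mathlib

section
/- For every n ≥ 1, the polynomial identity P^D_n(t) = (2nt − t + 1)·P^D_{n−1}(t) + 2t(1−t)·(d/dt)P^D_{n−1}(t) − t(1−t)^{n−1} holds. -/
open MeasureTheory Finset

/-- Number of descents of a finite sequence given as a list. -/
def descCount {α : Type*} [LT α] [DecidableRel ((· < ·) : α → α → Prop)] : List α → ℕ
  | a :: b :: rest => (if b < a then 1 else 0) + descCount (b :: rest)
  | _ => 0

/-- Type A Eulerian number: permutations of {1,…,n} with k descents. -/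
def eulerianA (n k : ℕ) : ℕ :=
  Fintype.card {σ : Equiv.Perm (Fin n) // descCount (List.ofFn fun i => σ i) = k}

/-- Eulerian polynomial of type A. -/
noncomputable def polyA (n : ℕ) (t : ℝ) : ℝ :=
  ∑ k ∈ Finset.range (n + 1), (eulerianA n k : ℝ) * t ^ k

/-- The underlying set {-n, …, -1, 0, 1, …, n}. -/
abbrev BSet (n : ℕ) : Type := {x : ℤ // x ∈ Finset.Icc (-(n : ℤ)) (n : ℤ)}

def negB {n : ℕ} (x : BSet n) : BSet n :=
  ⟨-x.1, by have := x.2; simp only [Finset.mem_Icc] at *; omega⟩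

def posB {n : ℕ} (i : Fin n) : BSet n :=
  ⟨((i : ℕ) : ℤ) + 1, by have := i.isLt; simp only [Finset.mem_Icc]; omega⟩

/-- A permutation of {-n,…,n} is a signed permutation if σ(-k) = -σ(k). -/
def IsSigned {n : ℕ} (σ : Equiv.Perm (BSet n)) : Prop :=
  ∀ x : BSet n, (σ (negB x)).1 = -((σ x).1)

noncomputable instance {n : ℕ} (σ : Equiv.Perm (BSet n)) : Decidable (IsSigned σ) :=
  inferInstanceAs (Decidable (∀ x : BSet n, (σ (negB x)).1 = -((σ x).1)))

/-- Number of descents of the sequence (0, σ(1), …, σ(n)). -/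
def descB {n : ℕ} (σ : Equiv.Perm (BSet n)) : ℕ :=
  descCount ((0 : ℤ) :: List.ofFn fun i : Fin n => (σ (posB i)).1)

/-- Number of negative terms among σ(1), …, σ(n). -/
def negCount {n : ℕ} (σ : Equiv.Perm (BSet n)) : ℕ :=
  (Finset.univ.filter fun i : Fin n => (σ (posB i)).1 < 0).card

/-- Type B Eulerian number. -/
noncomputable def eulerianB (n k : ℕ) : ℕ :=
  Fintype.card {σ : Equiv.Perm (BSet n) // IsSigned σ ∧ descB σ = k}

/-- Primary type D Eulerian number. -/
noncomputable def eulerianD (n k : ℕ) : ℕ :=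
  Fintype.card {σ : Equiv.Perm (BSet n) //
    (IsSigned σ ∧ Even (negCount σ)) ∧ descB σ = k}

/-- Complementary type D Eulerian number. -/
noncomputable def eulerianDt (n k : ℕ) : ℕ :=
  Fintype.card {σ : Equiv.Perm (BSet n) //
    (IsSigned σ ∧ ¬ Even (negCount σ)) ∧ descB σ = k}

noncomputable def polyB (n : ℕ) (t : ℝ) : ℝ :=
  ∑ k ∈ Finset.range (n + 1), (eulerianB n k : ℝ) * t ^ k

noncomputable def polyD (n : ℕ) (t : ℝ) : ℝ :=
  ∑ k ∈ Finset.range (n + 1), (eulerianD n k : ℝ) * t ^ k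

noncomputable def polyDt (n : ℕ) (t : ℝ) : ℝ :=
  ∑ k ∈ Finset.range (n + 1), (eulerianDt n k : ℝ) * t ^ k

noncomputable def polyDP (n : ℕ) : Polynomial ℝ :=
  ∑ k ∈ Finset.range (n + 1), Polynomial.C (eulerianD n k : ℝ) * Polynomial.X ^ k


/-- Signed-permutation model: a permutation of positions with signs. -/
abbrev MModel (n : ℕ) : Type := Equiv.Perm (Fin n) × (Fin n → Bool)

/-- The word of signed values. -/
def wM {n : ℕ} (m : MModel n) (i : Fin n) : ℤ :=
  if m.2 i then -((m.1 i : ℕ) : ℤ) - 1 else ((m.1 i : ℕ) : ℤ) + 1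

/-- The 0-prepended sequence. -/
def vM {n : ℕ} (m : MModel n) : Fin (n + 1) → ℤ := Fin.cases 0 (wM m)

def descMF {n : ℕ} (m : MModel n) : Finset (Fin n) :=
  Finset.univ.filter fun i => vM m i.succ < vM m i.castSucc

def descM {n : ℕ} (m : MModel n) : ℕ := (descMF m).card

def negM {n : ℕ} (m : MModel n) : ℕ := (Finset.univ.filter fun i => m.2 i).card

lemma wM_bounds {n : ℕ} (m : MModel n) (i : Fin n) :
    -((n : ℤ) + 1) < wM m i ∧ wM m i < (n : ℤ) + 1 := by
  have h : ((m.1 i : ℕ) : ℤ) < n := by exact_mod_cast (m.1 i).isLt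
  have h2 : (0:ℤ) ≤ ((m.1 i : ℕ) : ℤ) := Int.natCast_nonneg _
  unfold wM; split <;> omega

lemma vM_bounds {n : ℕ} (m : MModel n) (q : Fin (n + 1)) :
    -((n : ℤ) + 1) < vM m q ∧ vM m q < (n : ℤ) + 1 := by
  induction q using Fin.cases with
  | zero => simp [vM]; omega
  | succ t => simpa [vM] using wM_bounds m t

def insPerm {n : ℕ} (π : Equiv.Perm (Fin n)) (p : Fin (n + 1)) : Equiv.Perm (Fin (n + 1)) :=
  (finSuccEquiv' p).trans ((π.optionCongr).trans (finSuccEquiv' (Fin.last n)).symm)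

def insM {n : ℕ} (m : MModel n) (p : Fin (n + 1)) (s : Bool) : MModel (n + 1) :=
  (insPerm m.1 p, fun i => (finSuccEquiv' p i).elim s m.2)

lemma insPerm_at {n : ℕ} (π : Equiv.Perm (Fin n)) (p : Fin (n + 1)) :
    insPerm π p p = Fin.last n := by
  simp [insPerm, finSuccEquiv'_at]

lemma insPerm_succAbove {n : ℕ} (π : Equiv.Perm (Fin n)) (p : Fin (n + 1)) (j : Fin n) :
    insPerm π p (p.succAbove j) = (π j).castSucc := by
  simp [insPerm, finSuccEquiv'_succAbove, finSuccEquiv'_symm_some, Fin.succAbove_last]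

lemma insM_eps_at {n : ℕ} (m : MModel n) (p : Fin (n + 1)) (s : Bool) :
    (insM m p s).2 p = s := by
  simp [insM, finSuccEquiv'_at]

lemma insM_eps_succAbove {n : ℕ} (m : MModel n) (p : Fin (n + 1)) (s : Bool) (j : Fin n) :
    (insM m p s).2 (p.succAbove j) = m.2 j := by
  simp [insM, finSuccEquiv'_succAbove]

def cval (n : ℕ) (s : Bool) : ℤ := if s then -((n : ℤ)) - 1 else (n : ℤ) + 1

lemma wM_insM_at {n : ℕ} (m : MModel n) (p : Fin (n + 1)) (s : Bool) :
    wM (insM m p s) p = cval n s := by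
  unfold wM cval
  rw [insM_eps_at]
  have : ((insM m p s).1 p : ℕ) = n := by rw [show (insM m p s).1 = insPerm m.1 p from rfl, insPerm_at]; simp
  rw [this]

lemma wM_insM_succAbove {n : ℕ} (m : MModel n) (p : Fin (n + 1)) (s : Bool) (j : Fin n) :
    wM (insM m p s) (p.succAbove j) = wM m j := by
  unfold wM
  rw [insM_eps_succAbove]
  have : ((insM m p s).1 (p.succAbove j) : ℕ) = (m.1 j : ℕ) := by
    rw [show (insM m p s).1 = insPerm m.1 p from rfl, insPerm_succAbove]; simp
  rw [this]



lemma vM_zero {n : ℕ} (m : MModel n) : vM m 0 = 0 := rfl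

lemma vM_succ {n : ℕ} (m : MModel n) (i : Fin n) : vM m i.succ = wM m i := by simp [vM]

lemma sa_lt {k : ℕ} (e : Fin (k + 1)) (i : Fin k) (h : (i : ℕ) < (e : ℕ)) :
    e.succAbove i = i.castSucc :=
  Fin.succAbove_of_castSucc_lt _ _ (by rwa [Fin.lt_def, Fin.coe_castSucc])

lemma sa_ge {k : ℕ} (e : Fin (k + 1)) (i : Fin k) (h : (e : ℕ) ≤ (i : ℕ)) :
    e.succAbove i = i.succ :=
  Fin.succAbove_of_le_castSucc _ _ (by rwa [Fin.le_def, Fin.coe_castSucc])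

lemma vM_insM {n : ℕ} (m : MModel n) (p : Fin (n + 1)) (s : Bool) (r : Fin (n + 1)) :
    vM (insM m p s) (p.succ.succAbove r) = vM m r := by
  induction r using Fin.cases with
  | zero =>
    rw [sa_lt _ _ (by simp), Fin.castSucc_zero]
    simp [vM]
  | succ t =>
    rcases Nat.lt_or_ge (t : ℕ) (p : ℕ) with h | h
    · rw [sa_lt _ _ (by simp [h]), ← Fin.succ_castSucc, vM_succ, vM_succ,
        ← sa_lt p t h, wM_insM_succAbove]
    · rw [sa_ge _ _ (by simp [h]), vM_succ, vM_succ, ← sa_ge p t h, wM_insM_succAbove]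

lemma descM_insM {n : ℕ} (m : MModel n) (p : Fin (n + 1)) (s : Bool) :
    descM (insM m p s) =
      (if cval n s < vM m p then 1 else 0) +
        ∑ j : Fin n, (if j.castSucc = p then (if wM m j < cval n s then 1 else 0)
          else (if vM m j.succ < vM m j.castSucc then 1 else 0)) := by
  unfold descM descMF
  rw [Finset.card_filter, Fin.sum_univ_succAbove _ p]
  congr 1
  · have h1 : vM (insM m p s) p.succ = cval n s := by rw [vM_succ, wM_insM_at]
    have h2 : vM (insM m p s) p.castSucc = vM m p := by
      rw [show p.castSucc = p.succ.succAbove p from (sa_lt _ _ (by simp)).symm, vM_insM]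
    rw [h1, h2]
  · apply Finset.sum_congr rfl
    intro j _
    rcases lt_trichotomy (j.castSucc) p with h | h | h
    · have hv : (j : ℕ) < (p : ℕ) := by simpa [Fin.lt_def] using h
      rw [if_neg h.ne, sa_lt p j hv]
      have e1 : vM (insM m p s) j.castSucc.succ = vM m j.succ := by
        rw [Fin.succ_castSucc, show (j.succ).castSucc = p.succ.succAbove j.succ from
          (sa_lt _ _ (by simp [Nat.succ_lt_succ hv])).symm, vM_insM]
      have e2 : vM (insM m p s) j.castSucc.castSucc = vM m j.castSucc := by
        rw [show (j.castSucc).castSucc = p.succ.succAbove j.castSucc from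
          (sa_lt _ _ (by simp; omega)).symm, vM_insM]
      rw [e1, e2]
    · have hv : (p : ℕ) = (j : ℕ) := by rw [← h]; simp
      rw [if_pos h, sa_ge p j hv.le]
      have e1 : vM (insM m p s) j.succ.succ = wM m j := by
        rw [show (j.succ).succ = p.succ.succAbove j.succ from
          (sa_ge _ _ (by simp [hv])).symm, vM_insM, vM_succ]
      have e2 : vM (insM m p s) j.succ.castSucc = cval n s := by
        rw [← Fin.succ_castSucc, h, vM_succ, wM_insM_at]
      rw [e1, e2]
    · have hv : (p : ℕ) < (j : ℕ) := by simpa [Fin.lt_def] using h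
      rw [if_neg h.ne', sa_ge p j hv.le]
      have e1 : vM (insM m p s) j.succ.succ = vM m j.succ := by
        rw [show (j.succ).succ = p.succ.succAbove j.succ from
          (sa_ge _ _ (by simp; omega)).symm, vM_insM]
      have e2 : vM (insM m p s) j.succ.castSucc = vM m j.castSucc := by
        rw [← Fin.succ_castSucc, show (j.castSucc).succ = p.succ.succAbove j.castSucc from
          (sa_ge _ _ (by simp; omega)).symm, vM_insM]
      rw [e1, e2]

lemma descM_le {n : ℕ} (m : MModel n) : descM m ≤ n := by
  have := Finset.card_filter_le (Finset.univ : Finset (Fin n))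
    (fun i => vM m i.succ < vM m i.castSucc)
  simpa [descM, descMF] using this


lemma descM_insM_last {n : ℕ} (m : MModel n) (s : Bool) :
    descM (insM m (Fin.last n) s) = descM m + (if s then 1 else 0) := by
  rw [descM_insM]
  have hsum : (∑ j : Fin n, (if j.castSucc = Fin.last n then (if wM m j < cval n s then 1 else 0)
      else (if vM m j.succ < vM m j.castSucc then 1 else 0))) = descM m := by
    rw [show descM m = ∑ j : Fin n, (if vM m j.succ < vM m j.castSucc then 1 else 0) from by
      rw [descM, descMF, Finset.card_filter]]
    exact Finset.sum_congr rfl fun j _ => by rw [if_neg (Fin.castSucc_lt_last j).ne]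
  rw [hsum]
  have hb := vM_bounds m (Fin.last n)
  cases s with
  | false =>
    have h1 : ¬ (cval n false < vM m (Fin.last n)) := by simp only [cval]; norm_num; omega
    rw [if_neg h1]; simp
  | true =>
    have h1 : (cval n true < vM m (Fin.last n)) := by simp only [cval]; norm_num; omega
    rw [if_pos h1]; simp [Nat.add_comm]

lemma descM_insM_castSucc {n : ℕ} (m : MModel n) (q : Fin n) (s : Bool) :
    descM (insM m q.castSucc s) = descM m + (if q ∈ descMF m then 0 else 1) := by
  rw [descM_insM]
  have hq : ∀ g : Fin n → ℕ, (∑ j : Fin n, if j.castSucc = q.castSucc then g j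
      else (if vM m j.succ < vM m j.castSucc then 1 else 0)) =
      g q + ∑ j ∈ ({q}ᶜ : Finset (Fin n)), (if vM m j.succ < vM m j.castSucc then 1 else 0) := by
    intro g
    rw [Fintype.sum_eq_add_sum_compl q]
    congr 1
    · rw [if_pos rfl]
    · exact Finset.sum_congr rfl fun j hj => by
        rw [if_neg (by simpa [Fin.castSucc_inj] using (Finset.mem_compl.mp hj))]
  have hd : descM m = (if vM m q.succ < vM m q.castSucc then 1 else 0)
      + ∑ j ∈ ({q}ᶜ : Finset (Fin n)), (if vM m j.succ < vM m j.castSucc then 1 else 0) := by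
    rw [descM, descMF, Finset.card_filter, Fintype.sum_eq_add_sum_compl q]
  have hmem : q ∈ descMF m ↔ vM m q.succ < vM m q.castSucc := by simp [descMF]
  have hbq := vM_bounds m q.castSucc
  have hbw := wM_bounds m q
  cases s with
  | false =>
    have h1 : ¬ (cval n false < vM m q.castSucc) := by simp only [cval]; norm_num; omega
    rw [if_neg h1, hq]
    have h2 : (if wM m q < cval n false then (1:ℕ) else 0) = 1 := by
      rw [if_pos]; simp only [cval]; norm_num; omega
    rw [h2]
    by_cases hm : vM m q.succ < vM m q.castSucc
    · rw [if_pos (hmem.mpr hm)]; rw [if_pos hm] at hd; omega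
    · rw [if_neg (fun c => hm (hmem.mp c))]; rw [if_neg hm] at hd; omega
  | true =>
    have h1 : (cval n true < vM m q.castSucc) := by simp only [cval]; norm_num; omega
    rw [if_pos h1, hq]
    have h2 : (if wM m q < cval n true then (1:ℕ) else 0) = 0 := by
      rw [if_neg]; simp only [cval]; norm_num; omega
    rw [h2]
    by_cases hm : vM m q.succ < vM m q.castSucc
    · rw [if_pos (hmem.mpr hm)]; rw [if_pos hm] at hd; omega
    · rw [if_neg (fun c => hm (hmem.mp c))]; rw [if_neg hm] at hd; omega

lemma negM_insM {n : ℕ} (m : MModel n) (p : Fin (n + 1)) (s : Bool) :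
    negM (insM m p s) = negM m + (if s then 1 else 0) := by
  unfold negM
  rw [Finset.card_filter, Finset.card_filter, Fin.sum_univ_succAbove _ p]
  have h1 : ∀ j : Fin n, (if (insM m p s).2 (p.succAbove j) = true then (1:ℕ) else 0)
      = (if m.2 j = true then 1 else 0) := fun j => by rw [insM_eps_succAbove]
  rw [Finset.sum_congr rfl (fun j _ => h1 j)]
  have h2 : (insM m p s).2 p = s := insM_eps_at m p s
  rw [h2]
  cases s <;> simp [Nat.add_comm]

def insFun (n : ℕ) : MModel n × Fin (n + 1) × Bool → MModel (n + 1) :=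
  fun x => insM x.1 x.2.1 x.2.2

lemma insFun_injective (n : ℕ) : Function.Injective (insFun n) := by
  rintro ⟨m1, p1, s1⟩ ⟨m2, p2, s2⟩ h
  have h1 : insPerm m1.1 p1 = insPerm m2.1 p2 := congrArg (Prod.fst) h
  have hp : p1 = p2 := by
    have e1 : insPerm m2.1 p2 p1 = Fin.last n := by rw [← h1, insPerm_at]
    have e2 : insPerm m2.1 p2 p2 = Fin.last n := insPerm_at _ _
    exact (insPerm m2.1 p2).injective (e1.trans e2.symm)
  subst hp
  have h2 : (insM m1 p1 s1).2 = (insM m2 p1 s2).2 := congrArg Prod.snd h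
  have hs : s1 = s2 := by
    have hh := congrFun h2 p1
    rwa [insM_eps_at, insM_eps_at] at hh
  have hperm : m1.1 = m2.1 := by
    apply Equiv.ext
    intro j
    have e1 : insPerm m1.1 p1 (p1.succAbove j) = insPerm m2.1 p1 (p1.succAbove j) := by rw [h1]
    rw [insPerm_succAbove, insPerm_succAbove, Fin.castSucc_inj] at e1
    exact e1
  have heps : m1.2 = m2.2 := by
    funext j
    have hh := congrFun h2 (p1.succAbove j)
    rwa [insM_eps_succAbove, insM_eps_succAbove] at hh
  rw [show m1 = m2 from Prod.ext hperm heps, hs]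

lemma insFun_bijective (n : ℕ) : Function.Bijective (insFun n) := by
  rw [Fintype.bijective_iff_injective_and_card]
  refine ⟨insFun_injective n, ?_⟩
  simp only [Fintype.card_prod, Fintype.card_perm, Fintype.card_fun, Fintype.card_fin,
    Fintype.card_bool, MModel]
  rw [Nat.factorial_succ]
  ring

lemma sum_insFun {A : Type*} [AddCommMonoid A] (n : ℕ) (f : MModel (n + 1) → A) :
    ∑ m' : MModel (n + 1), f m' =
      ∑ m : MModel n, ∑ p : Fin (n + 1), ∑ s : Bool, f (insM m p s) := by
  rw [← (Fintype.sum_bijective (insFun n) (insFun_bijective n) _ f (fun x => rfl))]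
  rw [Fintype.sum_prod_type]
  exact Finset.sum_congr rfl fun m _ => Fintype.sum_prod_type _

open Polynomial in
lemma sumK {n : ℕ} (m : MModel n) (s : Bool) :
    ∑ p : Fin (n + 1), (X : ℝ[X]) ^ descM (insM m p s) =
      (C (descM m : ℝ) + C ((n : ℝ) - (descM m : ℝ)) * X + (if s then X else 1))
        * X ^ descM m := by
  rw [Fin.sum_univ_castSucc]
  have hlast : (X : ℝ[X]) ^ descM (insM m (Fin.last n) s) = (if s then X else 1) * X ^ descM m := by
    rw [descM_insM_last]
    cases s <;> simp [pow_succ, mul_comm]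
  have hmain : ∑ q : Fin n, (X : ℝ[X]) ^ descM (insM m q.castSucc s) =
      C (descM m : ℝ) * X ^ descM m + C ((n : ℝ) - (descM m : ℝ)) * X * X ^ descM m := by
    have hcong : ∀ q : Fin n, (X : ℝ[X]) ^ descM (insM m q.castSucc s) =
        if q ∈ descMF m then X ^ descM m else X ^ (descM m + 1) := by
      intro q
      rw [descM_insM_castSucc]
      by_cases hq : q ∈ descMF m
      · simp [hq]
      · simp [hq]
    rw [Finset.sum_congr rfl fun q _ => hcong q]
    rw [Finset.sum_ite, Finset.sum_const, Finset.sum_const]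
    have c1 : (Finset.univ.filter fun q => q ∈ descMF m) = descMF m := by
      ext q; simp
    have c2 : (Finset.univ.filter fun q => ¬ q ∈ descMF m) = (descMF m)ᶜ := by
      ext q; simp
    rw [c1, c2, Finset.card_compl]
    simp only [Fintype.card_fin]
    rw [← descM]
    have hle := descM_le m
    have e1 : (descM m) • ((X : ℝ[X]) ^ descM m) = C (descM m : ℝ) * X ^ descM m := by
      rw [nsmul_eq_mul]; simp
    have e2 : (n - descM m) • ((X : ℝ[X]) ^ (descM m + 1)) =
        C ((n : ℝ) - (descM m : ℝ)) * X * X ^ descM m := by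
      rw [nsmul_eq_mul]
      have : ((n - descM m : ℕ) : ℝ[X]) = C ((n : ℝ) - (descM m : ℝ)) := by
        rw [← Polynomial.C_eq_natCast, Nat.cast_sub hle]
      rw [this, pow_succ]
      ring
    rw [e1, e2]
  rw [hlast, hmain]
  ring

noncomputable def qD (n : ℕ) : Polynomial ℝ :=
  ∑ m ∈ Finset.univ.filter (fun m : MModel n => Even (negM m)), Polynomial.X ^ descM m

noncomputable def qDt (n : ℕ) : Polynomial ℝ :=
  ∑ m ∈ Finset.univ.filter (fun m : MModel n => ¬ Even (negM m)), Polynomial.X ^ descM m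

open Polynomial in
lemma X_mul_derivative_sum {ι : Type*} (S : Finset ι) (d : ι → ℕ) :
    (X : ℝ[X]) * derivative (∑ i ∈ S, (X : ℝ[X]) ^ d i) = ∑ i ∈ S, C ((d i : ℝ)) * X ^ d i := by
  rw [derivative_sum, Finset.mul_sum]
  refine Finset.sum_congr rfl fun i _ => ?_
  rw [derivative_X_pow]
  cases hd : d i with
  | zero => simp
  | succ k => rw [Nat.add_sub_cancel, pow_succ]; push_cast; ring

open Polynomial in
lemma sum_expand {n : ℕ} (S : Finset (MModel n)) (c : ℝ[X]) :
    ∑ m ∈ S, (C (descM m : ℝ) + C ((n : ℝ) - (descM m : ℝ)) * X + c) * X ^ descM m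
      = c * ∑ m ∈ S, X ^ descM m + X * derivative (∑ m ∈ S, X ^ descM m)
        + C (n : ℝ) * X * (∑ m ∈ S, X ^ descM m)
        - X * (X * derivative (∑ m ∈ S, X ^ descM m)) := by
  rw [X_mul_derivative_sum S descM]
  simp only [Finset.mul_sum, ← Finset.sum_add_distrib, ← Finset.sum_sub_distrib]
  refine Finset.sum_congr rfl fun m _ => ?_
  rw [map_sub]
  ring

open Polynomial in
lemma inner_sum_eval {n : ℕ} (m : MModel n) :
    (∑ p : Fin (n + 1), ∑ s : Bool,
        if Even (negM (insM m p s)) then (X : ℝ[X]) ^ descM (insM m p s) else 0)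
      = if Even (negM m)
        then (C (descM m : ℝ) + C ((n:ℝ) - (descM m : ℝ)) * X + 1) * X ^ descM m
        else (C (descM m : ℝ) + C ((n:ℝ) - (descM m : ℝ)) * X + X) * X ^ descM m := by
  have hb : ∀ p : Fin (n + 1), (∑ s : Bool,
      if Even (negM (insM m p s)) then (X : ℝ[X]) ^ descM (insM m p s) else 0)
      = if Even (negM m) then (X : ℝ[X]) ^ descM (insM m p false)
        else (X : ℝ[X]) ^ descM (insM m p true) := by
    intro p
    rw [Fintype.sum_bool]
    have ht : Even (negM (insM m p true)) ↔ ¬ Even (negM m) := by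
      rw [negM_insM]; simp [Nat.even_add_one]
    have hf : Even (negM (insM m p false)) ↔ Even (negM m) := by
      rw [negM_insM]; simp
    by_cases h : Even (negM m)
    · rw [if_pos h, if_neg (fun c => (ht.mp c) h), if_pos (hf.mpr h), zero_add]
    · rw [if_neg h, if_pos (ht.mpr h), if_neg (fun c => h (hf.mp c)), add_zero]
  rw [Finset.sum_congr rfl fun p _ => hb p]
  by_cases h : Even (negM m)
  · simp only [if_pos h]
    rw [sumK m false]
    simp
  · simp only [if_neg h]
    rw [sumK m true]
    simp

open Polynomial in
lemma qD_succ (n : ℕ) : qD (n + 1) =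
    1 * qD n + X * derivative (qD n) + C (n : ℝ) * X * qD n - X * (X * derivative (qD n))
      + (X * qDt n + X * derivative (qDt n) + C (n : ℝ) * X * qDt n
        - X * (X * derivative (qDt n))) := by
  have step1 : qD (n + 1) = ∑ m : MModel n,
      (if Even (negM m)
        then (C (descM m : ℝ) + C ((n:ℝ) - (descM m : ℝ)) * X + 1) * X ^ descM m
        else (C (descM m : ℝ) + C ((n:ℝ) - (descM m : ℝ)) * X + X) * X ^ descM m) := by
    rw [qD, Finset.sum_filter, sum_insFun]
    exact Finset.sum_congr rfl fun m _ => inner_sum_eval m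
  rw [step1, Finset.sum_ite, sum_expand, sum_expand, ← qD, ← qDt]

open Polynomial in
lemma inner_sum_eval' {n : ℕ} (m : MModel n) :
    (∑ p : Fin (n + 1), ∑ s : Bool,
        if ¬ Even (negM (insM m p s)) then (X : ℝ[X]) ^ descM (insM m p s) else 0)
      = if ¬ Even (negM m)
        then (C (descM m : ℝ) + C ((n:ℝ) - (descM m : ℝ)) * X + 1) * X ^ descM m
        else (C (descM m : ℝ) + C ((n:ℝ) - (descM m : ℝ)) * X + X) * X ^ descM m := by
  have hb : ∀ p : Fin (n + 1), (∑ s : Bool,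
      if ¬ Even (negM (insM m p s)) then (X : ℝ[X]) ^ descM (insM m p s) else 0)
      = if ¬ Even (negM m) then (X : ℝ[X]) ^ descM (insM m p false)
        else (X : ℝ[X]) ^ descM (insM m p true) := by
    intro p
    rw [Fintype.sum_bool]
    have ht : Even (negM (insM m p true)) ↔ ¬ Even (negM m) := by
      rw [negM_insM]; simp [Nat.even_add_one]
    have hf : Even (negM (insM m p false)) ↔ Even (negM m) := by
      rw [negM_insM]; simp
    by_cases h : Even (negM m)
    · rw [if_pos (fun c => (ht.mp c) h), if_neg (not_not_intro (hf.mpr h)),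
        if_neg (not_not_intro h), add_zero]
    · rw [if_neg (not_not_intro (ht.mpr h)), if_pos (fun c => h (hf.mp c)), if_pos h, zero_add]
  rw [Finset.sum_congr rfl fun p _ => hb p]
  by_cases h : Even (negM m)
  · simp only [if_neg (not_not_intro h)]
    rw [sumK m true]
    simp
  · simp only [if_pos h]
    rw [sumK m false]
    simp

open Polynomial in
lemma qDt_succ (n : ℕ) : qDt (n + 1) =
    1 * qDt n + X * derivative (qDt n) + C (n : ℝ) * X * qDt n - X * (X * derivative (qDt n))
      + (X * qD n + X * derivative (qD n) + C (n : ℝ) * X * qD n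
        - X * (X * derivative (qD n))) := by
  have step1 : qDt (n + 1) = ∑ m : MModel n,
      (if ¬ Even (negM m)
        then (C (descM m : ℝ) + C ((n:ℝ) - (descM m : ℝ)) * X + 1) * X ^ descM m
        else (C (descM m : ℝ) + C ((n:ℝ) - (descM m : ℝ)) * X + X) * X ^ descM m) := by
    rw [qDt, Finset.sum_filter, sum_insFun]
    exact Finset.sum_congr rfl fun m _ => inner_sum_eval' m
  rw [step1, Finset.sum_ite, sum_expand, sum_expand, ← qDt]
  have hff : (Finset.univ.filter fun m : MModel n => ¬¬ Even (negM m))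
      = Finset.univ.filter fun m : MModel n => Even (negM m) := by
    simp only [not_not]
  rw [hff, ← qD]

open Polynomial in
lemma qD_zero : qD 0 = 1 := by
  rw [qD]
  have h1 : (Finset.univ.filter fun m : MModel 0 => Even (negM m)) = Finset.univ := by
    refine Finset.filter_true_of_mem fun m _ => ?_
    simp [negM]
  rw [h1]
  have h2 : ∀ m : MModel 0, descM m = 0 := fun m => by simp [descM, descMF]
  rw [Finset.sum_congr rfl fun m _ => by rw [h2 m, pow_zero]]
  rw [Finset.sum_const]
  simp

open Polynomial in
lemma qDt_zero : qDt 0 = 0 := by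
  rw [qDt]
  have h1 : (Finset.univ.filter fun m : MModel 0 => ¬ Even (negM m)) = ∅ := by
    refine Finset.filter_false_of_mem fun m _ => ?_
    simp [negM]
  rw [h1, Finset.sum_empty]

open Polynomial in
lemma qDelta (n : ℕ) : qD n - qDt n = (1 - X) ^ n := by
  induction n with
  | zero => simp [qD_zero, qDt_zero]
  | succ k ih =>
    rw [qD_succ, qDt_succ, pow_succ, ← ih]
    ring


lemma descCount_ofFn : ∀ {k : ℕ} (v : Fin (k + 1) → ℤ),
    descCount (List.ofFn v) =
      (Finset.univ.filter fun i : Fin k => v i.succ < v i.castSucc).card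
  | 0, v => by
    simp [List.ofFn_succ, descCount]
  | (k+1), v => by
    have e1 : List.ofFn v = v 0 :: List.ofFn (fun i : Fin (k+1) => v i.succ) :=
      List.ofFn_succ (f := v)
    have e2 : List.ofFn (fun i : Fin (k+1) => v i.succ)
        = v (Fin.succ 0) :: List.ofFn (fun i : Fin k => v (Fin.succ i).succ) :=
      List.ofFn_succ
    have e3 : descCount (List.ofFn v)
        = (if v (Fin.succ 0) < v 0 then 1 else 0)
          + descCount (List.ofFn (fun i : Fin (k+1) => v i.succ)) := by
      rw [e1, e2]
      rfl
    rw [e3, descCount_ofFn (fun i : Fin (k+1) => v i.succ), Finset.card_filter,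
      Finset.card_filter, Fin.sum_univ_succ]
    congr 1

def zB (n : ℕ) : BSet n := ⟨0, by simp only [Finset.mem_Icc]; omega⟩

lemma bset_bounds {n : ℕ} (x : BSet n) : -(n : ℤ) ≤ x.1 ∧ x.1 ≤ n := by
  have := x.2; rwa [Finset.mem_Icc] at this

lemma signed_zero {n : ℕ} {σ : Equiv.Perm (BSet n)} (h : IsSigned σ) : σ (zB n) = zB n := by
  have h0 : negB (zB n) = zB n := Subtype.ext (by simp [negB, zB])
  have h1 := h (zB n)
  rw [h0] at h1
  exact Subtype.ext (by rw [show (zB n).1 = 0 from rfl]; omega)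

lemma signed_neg {n : ℕ} {σ : Equiv.Perm (BSet n)} (h : IsSigned σ) (x : BSet n) :
    σ (negB x) = negB (σ x) := Subtype.ext (h x)

lemma signed_posB_ne_zero {n : ℕ} {σ : Equiv.Perm (BSet n)} (h : IsSigned σ) (i : Fin n) :
    (σ (posB i)).1 ≠ 0 := by
  intro c
  have e1 : σ (posB i) = zB n := Subtype.ext (by simpa [zB] using c)
  have e2 : posB i = zB n := σ.injective (e1.trans (signed_zero h).symm)
  have := congrArg Subtype.val e2
  simp [posB, zB] at this
  omega

def toFinAbs {n : ℕ} (σ : Equiv.Perm (BSet n)) (hσ : IsSigned σ) (i : Fin n) : Fin n :=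
  ⟨(σ (posB i)).1.natAbs - 1, by
    have hb := bset_bounds (σ (posB i))
    have hne := signed_posB_ne_zero hσ i
    omega⟩

lemma toFinAbs_injective {n : ℕ} (σ : Equiv.Perm (BSet n)) (hσ : IsSigned σ) :
    Function.Injective (toFinAbs σ hσ) := by
  intro i j h
  have h1 : (σ (posB i)).1.natAbs - 1 = (σ (posB j)).1.natAbs - 1 := congrArg Fin.val h
  have hi := signed_posB_ne_zero hσ i
  have hj := signed_posB_ne_zero hσ j
  have h2 : (σ (posB i)).1.natAbs = (σ (posB j)).1.natAbs := by omega
  have h3 : (σ (posB i)).1 = (σ (posB j)).1 ∨ (σ (posB i)).1 = -((σ (posB j)).1) :=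
    Int.natAbs_eq_natAbs_iff.mp h2
  rcases h3 with h3 | h3
  · have := σ.injective (Subtype.ext h3)
    have hv := congrArg Subtype.val this
    simp only [posB] at hv
    exact Fin.ext (by omega)
  · have e1 : σ (posB i) = σ (negB (posB j)) := by
      rw [signed_neg hσ]; exact Subtype.ext h3
    have e2 := congrArg Subtype.val (σ.injective e1)
    simp only [posB, negB] at e2
    omega

noncomputable def toM {n : ℕ} (σ : Equiv.Perm (BSet n)) (hσ : IsSigned σ) : MModel n :=
  (Equiv.ofBijective _ ((Fintype.bijective_iff_injective_and_card _).mpr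
      ⟨toFinAbs_injective σ hσ, rfl⟩),
    fun i => decide ((σ (posB i)).1 < 0))

lemma wM_toM {n : ℕ} (σ : Equiv.Perm (BSet n)) (hσ : IsSigned σ) (i : Fin n) :
    wM (toM σ hσ) i = (σ (posB i)).1 := by
  have hb := bset_bounds (σ (posB i))
  have hne := signed_posB_ne_zero hσ i
  unfold wM toM
  simp only [Equiv.ofBijective_apply, toFinAbs, decide_eq_true_eq]
  split <;> rename_i hc <;> omega

lemma descB_toM {n : ℕ} (σ : Equiv.Perm (BSet n)) (hσ : IsSigned σ) :
    descB σ = descM (toM σ hσ) := by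
  have hl : ((0 : ℤ) :: List.ofFn fun i : Fin n => (σ (posB i)).1)
      = List.ofFn (vM (toM σ hσ)) := by
    rw [List.ofFn_succ (f := vM (toM σ hσ))]
    congr 1
    exact congrArg List.ofFn (funext fun i => by rw [vM_succ, wM_toM])
  rw [descB, hl, descCount_ofFn]
  rfl

lemma negCount_toM {n : ℕ} (σ : Equiv.Perm (BSet n)) (hσ : IsSigned σ) :
    negCount σ = negM (toM σ hσ) := by
  unfold negCount negM toM
  congr 1
  refine Finset.filter_congr fun i _ => ?_
  simp

def uVal {n : ℕ} (m : MModel n) (i : Fin n) : BSet n :=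
  if m.2 i then negB (posB (m.1 i)) else posB (m.1 i)

lemma uVal_val {n : ℕ} (m : MModel n) (i : Fin n) : (uVal m i).1 = wM m i := by
  unfold uVal wM
  split <;> simp [negB, posB] <;> ring

def gFun {n : ℕ} (m : MModel n) (x : BSet n) : BSet n :=
  if h : 0 < x.1 then uVal m ⟨x.1.toNat - 1, by
      have hb := bset_bounds x; omega⟩
  else if h' : x.1 < 0 then negB (uVal m ⟨(-x.1).toNat - 1, by
      have hb := bset_bounds x; omega⟩)
  else zB n

lemma gFun_posB {n : ℕ} (m : MModel n) (i : Fin n) : gFun m (posB i) = uVal m i := by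
  unfold gFun
  have h : 0 < (posB i).1 := by
    show (0:ℤ) < ((i:ℕ):ℤ) + 1
    omega
  rw [dif_pos h]
  congr 1

lemma gFun_zB {n : ℕ} (m : MModel n) : gFun m (zB n) = zB n := by
  unfold gFun
  rw [dif_neg (by simp [zB]), dif_neg (by simp [zB])]

lemma negB_negB {n : ℕ} (x : BSet n) : negB (negB x) = x := Subtype.ext (by simp [negB])

lemma negB_val {n : ℕ} (x : BSet n) : (negB x).1 = -x.1 := rfl

lemma gFun_neg {n : ℕ} (m : MModel n) (x : BSet n) : gFun m (negB x) = negB (gFun m x) := by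
  rcases lt_trichotomy x.1 0 with hx | hx | hx
  · have h1 : ¬ 0 < x.1 := by omega
    have h2 : 0 < (negB x).1 := by rw [negB_val]; omega
    unfold gFun
    rw [dif_pos h2, dif_neg h1, dif_pos hx, negB_negB]
    congr 1
  · have hxx : x = zB n := Subtype.ext hx
    have h0 : negB x = x := by rw [hxx]; exact Subtype.ext (by simp [negB, zB])
    rw [h0, hxx, gFun_zB]
    exact Subtype.ext (by simp [negB, zB])
  · have h1 : ¬ 0 < (negB x).1 := by rw [negB_val]; omega
    have h2 : (negB x).1 < 0 := by rw [negB_val]; omega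
    unfold gFun
    rw [dif_neg h1, dif_pos h2, dif_pos hx]
    congr 2
    apply Fin.ext
    show ((-(negB x).1).toNat - 1 : ℕ) = ((x.1).toNat - 1 : ℕ)
    rw [negB_val, neg_neg]

def invM {n : ℕ} (m : MModel n) : MModel n := (m.1.symm, fun j => m.2 (m.1.symm j))

lemma invM_invM {n : ℕ} (m : MModel n) : invM (invM m) = m := by
  unfold invM
  refine Prod.ext (Equiv.symm_symm m.1) (funext fun j => ?_)
  simp

lemma gFun_gFun_pos {n : ℕ} (m : MModel n) (i : Fin n) :
    gFun (invM m) (gFun m (posB i)) = posB i := by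
  rw [gFun_posB]
  have hinv : uVal (invM m) (m.1 i) = if m.2 i then negB (posB i) else posB i := by
    simp [uVal, invM]
  by_cases he : m.2 i
  · rw [show uVal m i = negB (posB (m.1 i)) from by rw [uVal, if_pos he]]
    rw [gFun_neg, gFun_posB, hinv, if_pos he, negB_negB]
  · rw [show uVal m i = posB (m.1 i) from by rw [uVal, if_neg he]]
    rw [gFun_posB, hinv, if_neg he]

lemma gFun_gFun {n : ℕ} (m : MModel n) (x : BSet n) : gFun (invM m) (gFun m x) = x := by
  rcases lt_trichotomy x.1 0 with hx | hx | hx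
  · obtain ⟨i, hi⟩ : ∃ i : Fin n, negB x = posB i := by
      refine ⟨⟨(-x.1).toNat - 1, by have := bset_bounds x; omega⟩, Subtype.ext ?_⟩
      show -x.1 = (((((-x.1).toNat - 1 : ℕ)):ℤ)) + 1
      omega
    have hxx : x = negB (posB i) := by rw [← hi, negB_negB]
    rw [hxx, gFun_neg, gFun_neg, gFun_gFun_pos]
  · rw [show x = zB n from Subtype.ext hx, gFun_zB, gFun_zB]
  · obtain ⟨i, rfl⟩ : ∃ i : Fin n, x = posB i := by
      refine ⟨⟨x.1.toNat - 1, by have := bset_bounds x; omega⟩, Subtype.ext ?_⟩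
      show x.1 = ((((x.1.toNat - 1 : ℕ)):ℤ)) + 1
      omega
    exact gFun_gFun_pos m i

def fromPerm {n : ℕ} (m : MModel n) : Equiv.Perm (BSet n) :=
  ⟨gFun m, gFun (invM m), fun x => gFun_gFun m x,
    fun x => by have h := gFun_gFun (invM m) x; rwa [invM_invM] at h⟩

lemma fromPerm_isSigned {n : ℕ} (m : MModel n) : IsSigned (fromPerm m) := by
  intro x
  show (gFun m (negB x)).1 = -((gFun m x).1)
  rw [gFun_neg, negB_val]

lemma fromPerm_posB {n : ℕ} (m : MModel n) (i : Fin n) :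
    ((fromPerm m) (posB i)).1 = wM m i := by
  show (gFun m (posB i)).1 = wM m i
  rw [gFun_posB, uVal_val]

lemma toM_fromPerm {n : ℕ} (m : MModel n) (hs : IsSigned (fromPerm m)) :
    toM (fromPerm m) hs = m := by
  set m' := toM (fromPerm m) hs with hm'
  have hw : ∀ i, wM m' i = wM m i := by
    intro i
    rw [hm', wM_toM, fromPerm_posB]
  have hbool : ∀ i : Fin n, m'.2 i = m.2 i ∧ ((m'.1 i : ℕ) : ℤ) = ((m.1 i : ℕ) : ℤ) := by
    intro i
    have h := hw i
    unfold wM at h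
    rcases Bool.eq_false_or_eq_true (m'.2 i) with hm1 | hm1 <;>
      rcases Bool.eq_false_or_eq_true (m.2 i) with hm2 | hm2 <;>
      rw [hm1, hm2] at h
    · rw [if_pos rfl, if_pos rfl] at h
      exact ⟨hm1.trans hm2.symm, by omega⟩
    · rw [if_pos rfl, if_neg Bool.false_ne_true] at h
      exact absurd h (by omega)
    · rw [if_neg Bool.false_ne_true, if_pos rfl] at h
      exact absurd h (by omega)
    · rw [if_neg Bool.false_ne_true, if_neg Bool.false_ne_true] at h
      exact ⟨hm1.trans hm2.symm, by omega⟩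
  refine Prod.ext ?_ (funext fun i => (hbool i).1)
  apply Equiv.ext
  intro i
  exact Fin.ext (by exact_mod_cast (hbool i).2)

lemma signed_ext {n : ℕ} {σ1 σ2 : Equiv.Perm (BSet n)} (h1 : IsSigned σ1) (h2 : IsSigned σ2)
    (h : ∀ i : Fin n, σ1 (posB i) = σ2 (posB i)) : σ1 = σ2 := by
  apply Equiv.ext
  intro x
  rcases lt_trichotomy x.1 0 with hx | hx | hx
  · obtain ⟨i, hi⟩ : ∃ i : Fin n, negB x = posB i := by
      refine ⟨⟨(-x.1).toNat - 1, by have := bset_bounds x; omega⟩, Subtype.ext ?_⟩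
      show -x.1 = (((((-x.1).toNat - 1 : ℕ)):ℤ)) + 1
      omega
    have hxx : x = negB (posB i) := by rw [← hi, negB_negB]
    rw [hxx, signed_neg h1, signed_neg h2, h i]
  · rw [show x = zB n from Subtype.ext hx, signed_zero h1, signed_zero h2]
  · obtain ⟨i, rfl⟩ : ∃ i : Fin n, x = posB i := by
      refine ⟨⟨x.1.toNat - 1, by have := bset_bounds x; omega⟩, Subtype.ext ?_⟩
      show x.1 = ((((x.1.toNat - 1 : ℕ)):ℤ)) + 1
      omega
    exact h i

lemma toM_inj {n : ℕ} {σ1 σ2 : Equiv.Perm (BSet n)} (h1 : IsSigned σ1) (h2 : IsSigned σ2)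
    (h : toM σ1 h1 = toM σ2 h2) : σ1 = σ2 := by
  refine signed_ext h1 h2 fun i => Subtype.ext ?_
  rw [← wM_toM σ1 h1, ← wM_toM σ2 h2, h]

lemma eulerianD_eq (n k : ℕ) :
    eulerianD n k = Fintype.card {m : MModel n // Even (negM m) ∧ descM m = k} := by
  apply Fintype.card_of_bijective
    (f := fun x : {σ : Equiv.Perm (BSet n) // (IsSigned σ ∧ Even (negCount σ)) ∧ descB σ = k} =>
      (⟨toM x.1 x.2.1.1, by
        constructor
        · rw [← negCount_toM x.1 x.2.1.1]; exact x.2.1.2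
        · rw [← descB_toM x.1 x.2.1.1]; exact x.2.2⟩ :
        {m : MModel n // Even (negM m) ∧ descM m = k}))
  constructor
  · intro a b hab
    have hv := congrArg Subtype.val hab
    exact Subtype.ext (toM_inj a.2.1.1 b.2.1.1 hv)
  · rintro ⟨mm, hmm⟩
    have hsg := fromPerm_isSigned mm
    refine ⟨⟨fromPerm mm, ⟨⟨hsg, ?_⟩, ?_⟩⟩, ?_⟩
    · rw [negCount_toM (fromPerm mm) hsg, toM_fromPerm mm hsg]; exact hmm.1
    · rw [descB_toM (fromPerm mm) hsg, toM_fromPerm mm hsg]; exact hmm.2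
    · exact Subtype.ext (toM_fromPerm mm _)

open Polynomial in
lemma polyDP_eq (n : ℕ) : polyDP n = qD n := by
  rw [polyDP, qD]
  rw [← Finset.sum_fiberwise_of_maps_to (g := descM) (t := Finset.range (n+1))
    (fun m _ => Finset.mem_range.mpr (Nat.lt_succ_of_le (descM_le m)))
    (fun m => (Polynomial.X : ℝ[X]) ^ descM m)]
  refine Finset.sum_congr rfl fun k hk => ?_
  rw [Finset.sum_congr rfl (fun m hm => by
    rw [(Finset.mem_filter.mp hm).2] : ∀ m ∈ _, (X : ℝ[X]) ^ descM m = X ^ k)]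
  rw [Finset.sum_const, Finset.filter_filter]
  rw [eulerianD_eq, Fintype.card_subtype]
  rw [nsmul_eq_mul, ← Polynomial.C_eq_natCast]

open Polynomial in
lemma deriv_one_sub_pow (k : ℕ) :
    derivative ((1 - X : ℝ[X]) ^ (k + 1)) = -(C ((k : ℝ) + 1)) * (1 - X) ^ k := by
  rw [derivative_pow]
  have h1 : derivative (1 - X : ℝ[X]) = -1 := by
    rw [derivative_sub, derivative_one, derivative_X]
    ring
  rw [h1, Nat.add_sub_cancel]
  push_cast
  ring

open Polynomial in
theorem stmt15 (n : ℕ) (hn : 1 ≤ n) :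
    polyDP n = (C (2 * (n : ℝ)) * X - X + 1) * polyDP (n - 1)
      + 2 * X * (1 - X) * derivative (polyDP (n - 1))
      - X * (1 - X) ^ (n - 1) := by
  obtain ⟨m, rfl⟩ : ∃ m, n = m + 1 := ⟨n - 1, (Nat.succ_pred_eq_of_pos hn).symm⟩
  simp only [Nat.add_sub_cancel]
  rw [polyDP_eq, polyDP_eq, qD_succ]
  have hqt : qDt m = qD m - (1 - X) ^ m := by
    rw [← qDelta]; ring
  rw [hqt]
  cases m with
  | zero =>
    rw [qD_zero]
    simp only [pow_zero, sub_self, derivative_one, derivative_zero, map_zero, map_add, map_mul,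
      map_one, map_ofNat, Nat.cast_zero, Nat.cast_one, Nat.cast_ofNat, mul_one, mul_zero,
      add_zero, zero_add]
    norm_num
    ring
  | succ k =>
    rw [derivative_sub, deriv_one_sub_pow k, pow_succ]
    push_cast
    simp only [map_add, map_mul, map_one, map_ofNat, Nat.cast_add, Nat.cast_one, Nat.cast_ofNat]
    ring
end

section
/- For every n ≥ 1, the polynomial identity P^D̃_n(t) = (2nt − t + 1)·P^D̃_{n−1}(t) + 2t(1−t)·(d/dt)P^D̃_{n−1}(t) + t(1−t)^{n−1} holds. -/
open MeasureTheory Finset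

noncomputable def polyDtP (n : ℕ) : Polynomial ℝ :=
  ∑ k ∈ Finset.range (n + 1), Polynomial.C (eulerianDt n k : ℝ) * Polynomial.X ^ k

section OfFn
theorem insertNth_succ' {α : Type*} {m : ℕ} (q : Fin (m+1)) (x : α) (f : Fin (m+1) → α) :
    Fin.insertNth (α := fun _ => α) q.succ x f
      = Fin.cons (f 0) (Fin.insertNth (α := fun _ => α) q x (fun j => f j.succ)) := by
  funext i
  cases i using Fin.cases with
  | zero =>
    have h0 : (0 : Fin (m+2)) = q.succ.succAbove 0 := by
      rw [Fin.succAbove_of_castSucc_lt] <;> simp [Fin.succ_pos]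
    rw [h0, Fin.insertNth_apply_succAbove]
    simp
  | succ i =>
    by_cases hiq : i = q
    · subst hiq
      rw [Fin.insertNth_apply_same]
      simp [Fin.insertNth_apply_same]
    · obtain ⟨j, hj⟩ := Fin.exists_succAbove_eq hiq
      subst hj
      rw [← Fin.succ_succAbove_succ, Fin.insertNth_apply_succAbove]
      simp [Fin.insertNth_apply_succAbove]

theorem ofFn_insertNth {α : Type*} {n : ℕ} (p : Fin (n+1)) (x : α) (f : Fin n → α) :
    List.ofFn (Fin.insertNth (α := fun _ => α) p x f) = (List.ofFn f).insertIdx p x := by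
  induction n with
  | zero =>
    have : p = 0 := Fin.fin_one_eq_zero p
    subst this
    simp [Fin.insertNth_zero', List.ofFn_succ]
  | succ m ih =>
    cases p using Fin.cases with
    | zero => simp [Fin.insertNth_zero', List.ofFn_succ]
    | succ q =>
      rw [insertNth_succ', List.ofFn_succ]
      simp only [Fin.cons_zero, Fin.cons_succ, Fin.val_succ, List.insertIdx_succ_cons]
      rw [ih, List.ofFn_succ, List.insertIdx_succ_cons]

end OfFn
section ListLemmas
open Polynomial Finset

theorem descCount_le {α : Type*} [LT α] [DecidableRel ((· < ·) : α → α → Prop)] :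
    ∀ (a : α) (l : List α), descCount (a :: l) ≤ l.length
  | _, [] => le_refl 0
  | a, b :: t => by
    show (if b < a then 1 else 0) + descCount (b :: t) ≤ t.length + 1
    have := descCount_le b t
    split <;> omega

theorem sum_insert_big : ∀ (l : List ℤ) (a v : ℤ), (∀ x ∈ a :: l, x < v) →
    ∑ g ∈ range (l.length + 1), (X : ℝ[X]) ^ descCount (a :: l.insertIdx g v)
    = (descCount (a :: l) + 1 : ℕ) • X ^ descCount (a :: l)
      + (l.length - descCount (a :: l)) • X ^ (descCount (a :: l) + 1)
  | [], a, v, h => by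
    simp only [List.length_nil, Nat.zero_add, Finset.sum_range_one]
    have hav : a < v := h a (by simp)
    show (X:ℝ[X]) ^ descCount [a, v] = _
    have h1 : descCount [a, v] = 0 := by simp [descCount, hav.not_gt]
    have h2 : descCount [a] = 0 := rfl
    rw [h1, h2]
    simp
  | b :: t, a, v, h => by
    have hbv : ∀ x ∈ b :: t, x < v := fun x hx => h x (List.mem_cons_of_mem a hx)
    have ih := sum_insert_big t b v hbv
    rw [Finset.sum_range_succ']
    have hav : a < v := h a (by simp)
    have hbv' : b < v := h b (by simp)
    have hd0 : descCount (a :: (b :: t).insertIdx 0 v) = descCount (b :: t) + 1 := by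
      show (if v < a then 1 else 0) + ((if b < v then 1 else 0) + descCount (b :: t)) = _
      rw [if_neg (not_lt.2 hav.le), if_pos hbv']
      omega
    have hdsucc : ∀ g : ℕ, descCount (a :: (b :: t).insertIdx (g+1) v)
        = (if b < a then 1 else 0) + descCount (b :: t.insertIdx g v) := by
      intro g
      rw [List.insertIdx_succ_cons]
      rfl
    have hD : descCount (a :: b :: t) = (if b < a then 1 else 0) + descCount (b :: t) := rfl
    have hle := descCount_le b t
    set d := descCount (b :: t) with hdd
    simp only [hdsucc, hd0, List.length_cons, hD]
    by_cases hba : b < a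
    · simp only [if_pos hba]
      have : ∀ g ∈ range (t.length + 1), (X:ℝ[X]) ^ (1 + descCount (b :: t.insertIdx g v))
          = X * X ^ descCount (b :: t.insertIdx g v) := by
        intro g _; rw [pow_add, pow_one]
      rw [Finset.sum_congr rfl this, ← Finset.mul_sum, ih]
      simp only [nsmul_eq_mul]
      push_cast [Nat.cast_sub hle, Nat.cast_sub (show 1 + d ≤ t.length + 1 by omega)]
      ring
    · simp only [if_neg hba]
      simp only [Nat.zero_add]
      rw [ih]
      simp only [nsmul_eq_mul]
      push_cast [Nat.cast_sub hle, Nat.cast_sub (show d ≤ t.length + 1 by omega)]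
      ring

theorem sum_insert_small : ∀ (l : List ℤ) (a v : ℤ), (∀ x ∈ a :: l, v < x) →
    ∑ g ∈ range (l.length + 1), (X : ℝ[X]) ^ descCount (a :: l.insertIdx g v)
    = (descCount (a :: l) : ℕ) • X ^ descCount (a :: l)
      + (l.length + 1 - descCount (a :: l)) • X ^ (descCount (a :: l) + 1)
  | [], a, v, h => by
    simp only [List.length_nil, Nat.zero_add, Finset.sum_range_one]
    have hav : v < a := h a (by simp)
    show (X:ℝ[X]) ^ descCount [a, v] = _
    have h1 : descCount [a, v] = 1 := by simp [descCount, hav]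
    have h2 : descCount [a] = 0 := rfl
    rw [h1, h2]
    simp
  | b :: t, a, v, h => by
    have hbv : ∀ x ∈ b :: t, v < x := fun x hx => h x (List.mem_cons_of_mem a hx)
    have ih := sum_insert_small t b v hbv
    rw [Finset.sum_range_succ']
    have hav : v < a := h a (by simp)
    have hbv' : v < b := h b (by simp)
    have hd0 : descCount (a :: (b :: t).insertIdx 0 v) = descCount (b :: t) + 1 := by
      show (if v < a then 1 else 0) + ((if b < v then 1 else 0) + descCount (b :: t)) = _
      rw [if_pos hav, if_neg (not_lt.2 hbv'.le)]
      omega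
    have hdsucc : ∀ g : ℕ, descCount (a :: (b :: t).insertIdx (g+1) v)
        = (if b < a then 1 else 0) + descCount (b :: t.insertIdx g v) := by
      intro g
      rw [List.insertIdx_succ_cons]
      rfl
    have hD : descCount (a :: b :: t) = (if b < a then 1 else 0) + descCount (b :: t) := rfl
    have hle := descCount_le b t
    set d := descCount (b :: t) with hdd
    simp only [hdsucc, hd0, List.length_cons, hD]
    by_cases hba : b < a
    · simp only [if_pos hba]
      have : ∀ g ∈ range (t.length + 1), (X:ℝ[X]) ^ (1 + descCount (b :: t.insertIdx g v))
          = X * X ^ descCount (b :: t.insertIdx g v) := by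
        intro g _; rw [pow_add, pow_one]
      rw [Finset.sum_congr rfl this, ← Finset.mul_sum, ih]
      simp only [nsmul_eq_mul]
      push_cast [Nat.cast_sub (show d ≤ t.length + 1 by omega),
        Nat.cast_sub (show 1 + d ≤ t.length + 1 + 1 by omega)]
      ring
    · simp only [if_neg hba]
      simp only [Nat.zero_add]
      rw [ih]
      simp only [nsmul_eq_mul]
      push_cast [Nat.cast_sub (show d ≤ t.length + 1 by omega),
        Nat.cast_sub (show d ≤ t.length + 1 + 1 by omega)]
      ring

end ListLemmas
section Words

/-- Good word: the sequence (σ(1),…,σ(n)) of a signed permutation. -/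
def GoodW (n : ℕ) (w : Fin n → ℤ) : Prop :=
  (∀ i, 1 ≤ (w i).natAbs ∧ (w i).natAbs ≤ n) ∧ Function.Injective fun i => (w i).natAbs

instance (n : ℕ) : DecidablePred (GoodW n) := fun _ => by unfold GoodW; infer_instance

def descW {n : ℕ} (w : Fin n → ℤ) : ℕ := descCount ((0 : ℤ) :: List.ofFn w)

def negW {n : ℕ} (w : Fin n → ℤ) : ℕ := (List.ofFn w).countP (fun x => decide (x < 0))

noncomputable def WFinset (n : ℕ) : Finset (Fin n → ℤ) :=
  (Fintype.piFinset fun _ : Fin n => Finset.Icc (-(n : ℤ)) (n : ℤ)).filter (GoodW n)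

theorem mem_WFinset {n : ℕ} {w : Fin n → ℤ} : w ∈ WFinset n ↔ GoodW n w := by
  constructor
  · intro h; exact (Finset.mem_filter.1 h).2
  · intro h
    refine Finset.mem_filter.2 ⟨Fintype.mem_piFinset.2 fun i => ?_, h⟩
    have := h.1 i
    simp only [Finset.mem_Icc]
    omega

/-- the word of a permutation -/
def wordOf {n : ℕ} (σ : Equiv.Perm (BSet n)) : Fin n → ℤ := fun i => (σ (posB i)).1

theorem sigma_zero {n : ℕ} {σ : Equiv.Perm (BSet n)} (hσ : IsSigned σ) :
    (σ ⟨0, by simp⟩).1 = 0 := by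
  have h := hσ ⟨0, by simp⟩
  have : negB (⟨0, by simp⟩ : BSet n) = ⟨0, by simp⟩ := by
    apply Subtype.ext; simp [negB]
  rw [this] at h
  omega

theorem wordOf_good {n : ℕ} {σ : Equiv.Perm (BSet n)} (hσ : IsSigned σ) :
    GoodW n (wordOf σ) := by
  constructor
  · intro i
    have hmem := (σ (posB i)).2
    simp only [Finset.mem_Icc] at hmem
    have hne : (σ (posB i)).1 ≠ 0 := by
      intro h0
      have h1 : σ (posB i) = σ ⟨0, by simp⟩ := by
        apply Subtype.ext
        rw [h0, sigma_zero hσ]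
      have h2 := σ.injective h1
      have h3 := congrArg Subtype.val h2
      simp only [posB] at h3
      omega
    unfold wordOf
    omega
  · intro i j hij
    simp only [wordOf] at hij
    have : σ (posB i) = σ (posB j) ∨ (σ (posB i)).1 = -((σ (posB j)).1) := by
      rcases Int.natAbs_eq_natAbs_iff.1 hij with h | h
      · left; exact Subtype.ext h
      · right; exact h
    rcases this with h | h
    · have := σ.injective h
      have := congrArg Subtype.val this
      simp only [posB] at this
      exact Fin.ext (by omega)
    · rw [← hσ (posB j)] at h
      have := σ.injective (Subtype.ext h)
      have := congrArg Subtype.val this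
      simp only [posB, negB] at this
      omega

/-- the function underlying the signed permutation built from a good word -/
def mkFun {n : ℕ} (w : Fin n → ℤ) (hw : GoodW n w) : BSet n → BSet n := fun x =>
  if h : x.1 = 0 then ⟨0, by simp⟩
  else
    have hx := x.2
    have hx' : x.1.natAbs - 1 < n := by simp only [Finset.mem_Icc] at hx; omega
    have hb := hw.1 ⟨x.1.natAbs - 1, hx'⟩
    ⟨if 0 < x.1 then w ⟨x.1.natAbs - 1, hx'⟩ else -(w ⟨x.1.natAbs - 1, hx'⟩), by
      simp only [Finset.mem_Icc]; split <;> omega⟩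

theorem mkFun_inj {n : ℕ} (w : Fin n → ℤ) (hw : GoodW n w) :
    Function.Injective (mkFun w hw) := by
  intro x y hxy
  have hxy' := congrArg Subtype.val hxy
  apply Subtype.ext
  unfold mkFun at hxy'
  have hx2 := x.2; have hy2 := y.2
  simp only [Finset.mem_Icc] at hx2 hy2
  by_cases hx : x.1 = 0 <;> by_cases hy : y.1 = 0
  · rw [hx, hy]
  · exfalso
    have hy' : y.1.natAbs - 1 < n := by omega
    have hb := hw.1 ⟨y.1.natAbs - 1, hy'⟩
    simp only [dif_pos hx, dif_neg hy] at hxy'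
    split_ifs at hxy' <;> omega
  · exfalso
    have hx' : x.1.natAbs - 1 < n := by omega
    have hb := hw.1 ⟨x.1.natAbs - 1, hx'⟩
    simp only [dif_pos hy, dif_neg hx] at hxy'
    split_ifs at hxy' <;> omega
  · simp only [dif_neg hx, dif_neg hy] at hxy'
    have hxn : x.1.natAbs - 1 < n := by omega
    have hyn : y.1.natAbs - 1 < n := by omega
    have hbx := hw.1 ⟨x.1.natAbs - 1, hxn⟩
    have hby := hw.1 ⟨y.1.natAbs - 1, hyn⟩
    have habs : (w ⟨x.1.natAbs - 1, hxn⟩).natAbs = (w ⟨y.1.natAbs - 1, hyn⟩).natAbs := by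
      split_ifs at hxy' <;> omega
    have hidx : (⟨x.1.natAbs - 1, hxn⟩ : Fin n) = ⟨y.1.natAbs - 1, hyn⟩ := hw.2 habs
    have hidx' : x.1.natAbs - 1 = y.1.natAbs - 1 := congrArg Fin.val hidx
    have hww : w ⟨x.1.natAbs - 1, hxn⟩ = w ⟨y.1.natAbs - 1, hyn⟩ := congrArg w hidx
    split_ifs at hxy' <;> omega

/-- the signed permutation built from a good word -/
noncomputable def mkPerm {n : ℕ} (w : Fin n → ℤ) (hw : GoodW n w) : Equiv.Perm (BSet n) :=
  Equiv.ofBijective (mkFun w hw)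
    ((Finite.injective_iff_bijective).1 (mkFun_inj w hw))

theorem mkPerm_apply {n : ℕ} (w : Fin n → ℤ) (hw : GoodW n w) (x : BSet n) :
    mkPerm w hw x = mkFun w hw x := rfl

theorem mkPerm_signed {n : ℕ} (w : Fin n → ℤ) (hw : GoodW n w) : IsSigned (mkPerm w hw) := by
  intro x
  rw [mkPerm_apply, mkPerm_apply]
  have hx2 := x.2
  simp only [Finset.mem_Icc] at hx2
  unfold mkFun negB
  by_cases hx : x.1 = 0
  · have hnx : (-x.1 = 0) := by omega
    simp only [hx, hnx, neg_zero, dif_pos]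
  · have hnx : ¬(-x.1 = 0) := by omega
    simp only [dif_neg hx, dif_neg hnx]
    have h1 : (-x.1).natAbs - 1 = x.1.natAbs - 1 := by omega
    have hxn : x.1.natAbs - 1 < n := by omega
    have hww : w ⟨(-x.1).natAbs - 1, by omega⟩ = w ⟨x.1.natAbs - 1, hxn⟩ :=
      congrArg w (Fin.ext h1)
    simp only [hww]
    split_ifs <;> omega

theorem wordOf_mkPerm {n : ℕ} (w : Fin n → ℤ) (hw : GoodW n w) :
    wordOf (mkPerm w hw) = w := by
  funext i
  unfold wordOf
  rw [mkPerm_apply]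
  unfold mkFun posB
  have h1 : ¬((((i : ℕ) : ℤ) + 1) = 0) := by omega
  have h2 : (0 : ℤ) < ((i : ℕ) : ℤ) + 1 := by omega
  simp only [dif_neg h1, if_pos h2]
  congr 1

theorem signed_ext_s16 {n : ℕ} {σ τ : Equiv.Perm (BSet n)} (hσ : IsSigned σ) (hτ : IsSigned τ)
    (h : wordOf σ = wordOf τ) : σ = τ := by
  apply Equiv.ext
  intro x
  have hx2 := x.2
  simp only [Finset.mem_Icc] at hx2
  apply Subtype.ext
  rcases lt_trichotomy x.1 0 with hlt | heq | hgt
  · have hi : x.1.natAbs - 1 < n := by omega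
    have hxe : x = negB (posB ⟨x.1.natAbs - 1, hi⟩) := by
      apply Subtype.ext
      simp only [negB, posB]
      omega
    rw [hxe, hσ, hτ]
    have := congrFun h ⟨x.1.natAbs - 1, hi⟩
    unfold wordOf at this
    rw [this]
  · have hxe : x = (⟨0, by simp⟩ : BSet n) := Subtype.ext heq
    rw [hxe, sigma_zero hσ, sigma_zero hτ]
  · have hi : x.1.natAbs - 1 < n := by omega
    have hxe : x = posB ⟨x.1.natAbs - 1, hi⟩ := by
      apply Subtype.ext
      simp only [posB]
      omega
    rw [hxe]
    have := congrFun h ⟨x.1.natAbs - 1, hi⟩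
    unfold wordOf at this
    rw [this]

end Words

theorem countP_ofFn {α : Type*} {n : ℕ} (f : Fin n → α) (p : α → Bool) :
    (List.ofFn f).countP p = (Finset.univ.filter fun i => p (f i)).card := by
  induction n with
  | zero => simp
  | succ m ih =>
    rw [List.ofFn_succ, List.countP_cons, ih, Finset.card_filter, Finset.card_filter,
      Fin.sum_univ_succ]
    omega

theorem negW_wordOf {n : ℕ} (σ : Equiv.Perm (BSet n)) : negW (wordOf σ) = negCount σ := by
  rw [negW, negCount, countP_ofFn]
  congr 1
  ext i
  simp only [Finset.mem_filter, Finset.mem_univ, true_and, decide_eq_true_eq]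
  rfl

theorem descW_wordOf {n : ℕ} (σ : Equiv.Perm (BSet n)) : descW (wordOf σ) = descB σ := rfl

theorem card_transfer {n : ℕ} (Q : (Fin n → ℤ) → Prop) [DecidablePred Q] :
    Fintype.card {σ : Equiv.Perm (BSet n) // IsSigned σ ∧ Q (wordOf σ)}
      = ((WFinset n).filter Q).card := by
  rw [Fintype.card_subtype]
  apply Finset.card_bij (fun σ _ => wordOf σ)
  · intro σ hσ
    simp only [Finset.mem_filter, Finset.mem_univ, true_and] at hσ
    exact Finset.mem_filter.2 ⟨mem_WFinset.2 (wordOf_good hσ.1), hσ.2⟩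
  · intro σ hσ τ hτ h
    simp only [Finset.mem_filter, Finset.mem_univ, true_and] at hσ hτ
    exact signed_ext_s16 hσ.1 hτ.1 h
  · intro w hw
    simp only [Finset.mem_filter] at hw
    have hg := mem_WFinset.1 hw.1
    refine ⟨mkPerm w hg, ?_, wordOf_mkPerm w hg⟩
    simp only [Finset.mem_filter, Finset.mem_univ, true_and]
    constructor
    · exact mkPerm_signed w hg
    · rw [wordOf_mkPerm w hg]; exact hw.2

open Polynomial

noncomputable def SDt (n : ℕ) : ℝ[X] :=
  ∑ w ∈ (WFinset n).filter (fun w => ¬ Even (negW w)), X ^ descW w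

noncomputable def SD (n : ℕ) : ℝ[X] :=
  ∑ w ∈ (WFinset n).filter (fun w => Even (negW w)), X ^ descW w

theorem descW_le {n : ℕ} (w : Fin n → ℤ) : descW w ≤ n := by
  have := descCount_le (0 : ℤ) (List.ofFn w)
  rwa [List.length_ofFn] at this

theorem poly_sum_transfer {n : ℕ} (P : (Fin n → ℤ) → Prop) [DecidablePred P]
    (cnt : ℕ → ℕ)
    (hcnt : ∀ k, cnt k = ((WFinset n).filter (fun w => P w ∧ descW w = k)).card) :
    ∑ k ∈ Finset.range (n + 1), C (cnt k : ℝ) * X ^ k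
      = ∑ w ∈ (WFinset n).filter P, X ^ descW w := by
  rw [← Finset.sum_fiberwise_of_maps_to (g := descW) (t := Finset.range (n + 1))
    (fun w _ => Finset.mem_range.2 (Nat.lt_succ_of_le (descW_le w)))]
  apply Finset.sum_congr rfl
  intro k _
  rw [Finset.filter_filter]
  have hc : ∀ w ∈ (WFinset n).filter (fun w => P w ∧ descW w = k),
      (X:ℝ[X]) ^ descW w = X ^ k := fun w hw => by rw [(Finset.mem_filter.1 hw).2.2]
  rw [Finset.sum_congr rfl hc, Finset.sum_const, hcnt k, nsmul_eq_mul]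
  simp [Polynomial.C_eq_natCast]

theorem eulerianDt_card (n k : ℕ) :
    eulerianDt n k = ((WFinset n).filter (fun w => ¬ Even (negW w) ∧ descW w = k)).card := by
  rw [← card_transfer (fun w => ¬ Even (negW w) ∧ descW w = k)]
  apply Fintype.card_congr
  apply Equiv.subtypeEquivRight
  intro σ
  rw [negW_wordOf, descW_wordOf]
  tauto

theorem eulerianD_card (n k : ℕ) :
    eulerianD n k = ((WFinset n).filter (fun w => Even (negW w) ∧ descW w = k)).card := by
  rw [← card_transfer (fun w => Even (negW w) ∧ descW w = k)]
  apply Fintype.card_congr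
  apply Equiv.subtypeEquivRight
  intro σ
  rw [negW_wordOf, descW_wordOf]
  tauto

theorem polyDtP_eq_SDt (n : ℕ) : polyDtP n = SDt n := by
  rw [polyDtP, SDt]
  exact poly_sum_transfer _ _ (fun k => eulerianDt_card n k)

section Insertion

theorem countP_insertIdx {α : Type*} (p : α → Bool) :
    ∀ (g : ℕ) (l : List α) (v : α), g ≤ l.length →
      (l.insertIdx g v).countP p = l.countP p + (if p v then 1 else 0)
  | 0, l, v, _ => by
    rw [List.insertIdx_zero, List.countP_cons]
  | g+1, [], v, h => by simp at h
  | g+1, a :: t, v, h => by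
    rw [List.insertIdx_succ_cons, List.countP_cons, List.countP_cons,
      countP_insertIdx p g t v (by simpa using h)]
    omega

theorem exists_unique_top {m : ℕ} {w : Fin (m+1) → ℤ} (hw : GoodW (m+1) w) :
    ∃! i : Fin (m+1), i ∈ Finset.univ ∧ (w i).natAbs = m+1 := by
  have hsurj := Finset.surj_on_of_inj_on_of_card_le
    (s := (Finset.univ : Finset (Fin (m+1)))) (t := Finset.Icc 1 (m+1))
    (fun i _ => (w i).natAbs) (fun i _ => Finset.mem_Icc.2 ⟨(hw.1 i).1, (hw.1 i).2⟩)
    (fun i j _ _ h => hw.2 h)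
    (by simp)
  obtain ⟨i, hmem, hi⟩ := hsurj (m+1) (Finset.mem_Icc.2 ⟨by omega, le_refl _⟩)
  refine ⟨i, ⟨Finset.mem_univ i, hi.symm⟩, fun j hj => ?_⟩
  have hi' : m + 1 = (w i).natAbs := hi
  exact hw.2 (show (w j).natAbs = (w i).natAbs by rw [hj.2, ← hi'])

/-- position of the maximal letter -/
noncomputable def topIdx {m : ℕ} (w : Fin (m+1) → ℤ) (hw : GoodW (m+1) w) : Fin (m+1) :=
  Finset.choose (fun i => (w i).natAbs = m+1) Finset.univ (exists_unique_top hw)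

theorem topIdx_spec {m : ℕ} (w : Fin (m+1) → ℤ) (hw : GoodW (m+1) w) :
    (w (topIdx w hw)).natAbs = m+1 :=
  (Finset.choose_spec (fun i => (w i).natAbs = m+1) Finset.univ (exists_unique_top hw)).2

theorem topIdx_eq {m : ℕ} (w : Fin (m+1) → ℤ) (hw : GoodW (m+1) w) (p : Fin (m+1))
    (hp : (w p).natAbs = m+1) : topIdx w hw = p :=
  ((exists_unique_top hw).unique ⟨Finset.mem_univ _, topIdx_spec w hw⟩
    ⟨Finset.mem_univ _, hp⟩)

theorem good_removeNth {m : ℕ} {w : Fin (m+1) → ℤ} (hw : GoodW (m+1) w) (p : Fin (m+1))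
    (hp : (w p).natAbs = m+1) : GoodW m (Fin.removeNth p w) := by
  constructor
  · intro i
    have h1 := hw.1 (p.succAbove i)
    have hne : (w (p.succAbove i)).natAbs ≠ m+1 := by
      intro h
      exact Fin.succAbove_ne p i (hw.2 (show (w (p.succAbove i)).natAbs = (w p).natAbs by
        rw [h, hp]))
    unfold Fin.removeNth
    omega
  · intro i j h
    exact Fin.succAbove_right_injective (p := p) (hw.2 h)

theorem good_insertNth {m : ℕ} (p : Fin (m+1)) (v : ℤ) (hv : v.natAbs = m+1)
    {w : Fin m → ℤ} (hw : GoodW m w) :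
    GoodW (m+1) (Fin.insertNth (α := fun _ => ℤ) p v w) := by
  have happ : ∀ j : Fin (m+1), Fin.insertNth (α := fun _ => ℤ) p v w j = v ∨
      ∃ i : Fin m, j = p.succAbove i ∧ Fin.insertNth (α := fun _ => ℤ) p v w j = w i := by
    intro j
    by_cases hj : j = p
    · left; rw [hj, Fin.insertNth_apply_same]
    · right
      obtain ⟨i, hi⟩ := Fin.exists_succAbove_eq hj
      exact ⟨i, hi.symm, by rw [← hi, Fin.insertNth_apply_succAbove]⟩
  constructor
  · intro j
    rcases happ j with h | ⟨i, -, h⟩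
    · rw [h]; omega
    · rw [h]; have := hw.1 i; omega
  · intro i j h
    simp only at h
    rcases happ i with h1 | ⟨i', hi', h1⟩ <;> rcases happ j with h2 | ⟨j', hj', h2⟩
    · -- both equal to p
      by_cases hip : i = p
      · by_cases hjp : j = p
        · rw [hip, hjp]
        · obtain ⟨j', hj'⟩ := Fin.exists_succAbove_eq hjp
          rw [← hj', Fin.insertNth_apply_succAbove] at h2
          have := hw.1 j'; omega
      · obtain ⟨i', hi'⟩ := Fin.exists_succAbove_eq hip
        rw [← hi', Fin.insertNth_apply_succAbove] at h1
        have := hw.1 i'; omega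
    · rw [h1, h2] at h
      have := hw.1 j'; omega
    · rw [h1, h2] at h
      have := hw.1 i'; omega
    · rw [h1, h2] at h
      rw [hi', hj']
      congr 1
      exact hw.2 h

theorem descW_insertNth {m : ℕ} (p : Fin (m+1)) (v : ℤ) (w : Fin m → ℤ) :
    descW (Fin.insertNth (α := fun _ => ℤ) p v w)
      = descCount ((0:ℤ) :: (List.ofFn w).insertIdx p v) := by
  rw [descW, ofFn_insertNth]

theorem negW_insertNth {m : ℕ} (p : Fin (m+1)) (v : ℤ) (w : Fin m → ℤ) :
    negW (Fin.insertNth (α := fun _ => ℤ) p v w)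
      = negW w + (if v < 0 then 1 else 0) := by
  rw [negW, negW, ofFn_insertNth, countP_insertIdx _ _ _ _ (by
    rw [List.length_ofFn]; omega)]
  simp only [decide_eq_true_eq]

theorem reinsert {m : ℕ} (w : Fin (m+1) → ℤ) (hw : GoodW (m+1) w) :
    Fin.insertNth (α := fun _ => ℤ) (topIdx w hw)
      (if decide (0 < w (topIdx w hw)) then ((m:ℤ)+1) else -((m:ℤ)+1))
      (Fin.removeNth (topIdx w hw) w) = w := by
  have hts := topIdx_spec w hw
  have hval : (if decide (0 < w (topIdx w hw)) then ((m:ℤ)+1) else -((m:ℤ)+1))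
      = w (topIdx w hw) := by
    split_ifs with h
    · simp only [decide_eq_true_eq] at h; omega
    · simp only [decide_eq_true_eq] at h; omega
  rw [hval]
  exact Fin.insertNth_self_removeNth _ _

theorem remove_insert {m : ℕ} (g : Fin (m+1)) (b : Bool) (w' : Fin m → ℤ) (hg : GoodW m w')
    (hX : GoodW (m+1) (Fin.insertNth (α := fun _ => ℤ) g
      (if b then ((m:ℤ)+1) else -((m:ℤ)+1)) w')) :
    ((Fin.removeNth (topIdx _ hX) (Fin.insertNth (α := fun _ => ℤ) g
        (if b then ((m:ℤ)+1) else -((m:ℤ)+1)) w'),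
      (topIdx _ hX,
        decide (0 < Fin.insertNth (α := fun _ => ℤ) g
          (if b then ((m:ℤ)+1) else -((m:ℤ)+1)) w' (topIdx _ hX))))
      : (Fin m → ℤ) × Fin (m+1) × Bool) = (w', (g, b)) := by
  have htop : topIdx _ hX = g := by
    apply topIdx_eq
    rw [Fin.insertNth_apply_same]
    split <;> omega
  rw [htop, Fin.removeNth_insertNth, Fin.insertNth_apply_same]
  have hb : decide (0 < if b then ((m:ℤ)+1) else -((m:ℤ)+1)) = b := by
    cases b <;> simp <;> omega
  rw [hb]

theorem sum_words_succ (m : ℕ) (F : (Fin (m+1) → ℤ) → Polynomial ℝ) :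
    ∑ w ∈ WFinset (m+1), F w
      = ∑ q ∈ (WFinset m) ×ˢ (Finset.univ : Finset (Fin (m+1) × Bool)),
          F (Fin.insertNth (α := fun _ => ℤ) q.2.1
              (if q.2.2 then ((m:ℤ)+1) else -((m:ℤ)+1)) q.1) := by
  refine Finset.sum_bij'
    (fun w hw => (Fin.removeNth (topIdx w (mem_WFinset.1 hw)) w,
      (topIdx w (mem_WFinset.1 hw), decide (0 < w (topIdx w (mem_WFinset.1 hw))))))
    (fun q hq => Fin.insertNth (α := fun _ => ℤ) q.2.1
      (if q.2.2 then ((m:ℤ)+1) else -((m:ℤ)+1)) q.1) ?_ ?_ ?_ ?_ ?_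
  · intro w hw
    have hg := mem_WFinset.1 hw
    exact Finset.mem_product.2 ⟨mem_WFinset.2 (good_removeNth hg _ (topIdx_spec w hg)),
      Finset.mem_univ _⟩
  · intro q hq
    have hg := mem_WFinset.1 (Finset.mem_product.1 hq).1
    exact mem_WFinset.2 (good_insertNth _ _ (by split <;> omega) hg)
  · intro w hw
    exact reinsert w (mem_WFinset.1 hw)
  · intro q hq
    have hg := mem_WFinset.1 (Finset.mem_product.1 hq).1
    exact remove_insert q.2.1 q.2.2 q.1 hg _
  · intro w hw
    exact (congrArg F (reinsert w (mem_WFinset.1 hw))).symm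

end Insertion

section Recurrence
open Polynomial

theorem term_aux (d : ℕ) :
    (X:ℝ[X]) * derivative ((X:ℝ[X]) ^ d) = C (d:ℝ) * X ^ d := by
  cases d with
  | zero => simp
  | succ e =>
    rw [derivative_X_pow]
    push_cast
    ring

theorem term_big (m d : ℕ) (hd : d ≤ m) :
    ((d+1) : ℕ) • (X:ℝ[X])^d + (m - d) • (X:ℝ[X])^(d+1)
      = X^d + X * derivative ((X:ℝ[X])^d) + C (m:ℝ) * X * X^d
        - X^2 * derivative ((X:ℝ[X])^d) := by
  have h := term_aux d
  have h2 : (X:ℝ[X])^2 * derivative ((X:ℝ[X])^d) = C (d:ℝ) * X^(d+1) := by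
    rw [pow_two, mul_assoc, h]; ring
  rw [h, h2]
  simp only [nsmul_eq_mul, Polynomial.C_eq_natCast]
  push_cast [Nat.cast_sub hd]
  ring

theorem term_small (m d : ℕ) (hd : d ≤ m) :
    (d : ℕ) • (X:ℝ[X])^d + (m + 1 - d) • (X:ℝ[X])^(d+1)
      = X * derivative ((X:ℝ[X])^d) + (C (m:ℝ) + 1) * X * X^d
        - X^2 * derivative ((X:ℝ[X])^d) := by
  have h := term_aux d
  have h2 : (X:ℝ[X])^2 * derivative ((X:ℝ[X])^d) = C (d:ℝ) * X^(d+1) := by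
    rw [pow_two, mul_assoc, h]; ring
  rw [h, h2]
  simp only [nsmul_eq_mul, Polynomial.C_eq_natCast]
  push_cast [Nat.cast_sub (show d ≤ m + 1 by omega)]
  ring

theorem sum_term_big (m : ℕ) (s : Finset (Fin m → ℤ)) :
    ∑ w ∈ s, (((descW w + 1) : ℕ) • (X:ℝ[X])^(descW w) + (m - descW w) • (X:ℝ[X])^(descW w + 1))
    = (∑ w ∈ s, (X:ℝ[X])^(descW w)) + X * derivative (∑ w ∈ s, (X:ℝ[X])^(descW w))
      + C (m:ℝ) * X * (∑ w ∈ s, (X:ℝ[X])^(descW w))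
      - X^2 * derivative (∑ w ∈ s, (X:ℝ[X])^(descW w)) := by
  rw [derivative_sum, Finset.mul_sum, Finset.mul_sum, Finset.mul_sum,
    ← Finset.sum_add_distrib, ← Finset.sum_add_distrib, ← Finset.sum_sub_distrib]
  exact Finset.sum_congr rfl fun w _ => term_big m (descW w) (descW_le w)

theorem sum_term_small (m : ℕ) (s : Finset (Fin m → ℤ)) :
    ∑ w ∈ s, ((descW w : ℕ) • (X:ℝ[X])^(descW w) + (m + 1 - descW w) • (X:ℝ[X])^(descW w + 1))
    = X * derivative (∑ w ∈ s, (X:ℝ[X])^(descW w))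
      + (C (m:ℝ) + 1) * X * (∑ w ∈ s, (X:ℝ[X])^(descW w))
      - X^2 * derivative (∑ w ∈ s, (X:ℝ[X])^(descW w)) := by
  rw [derivative_sum, Finset.mul_sum, Finset.mul_sum, Finset.mul_sum,
    ← Finset.sum_add_distrib, ← Finset.sum_sub_distrib]
  exact Finset.sum_congr rfl fun w _ => term_small m (descW w) (descW_le w)

theorem myInnerSum (m : ℕ) (pr : ℕ → Prop) [DecidablePred pr] (w' : Fin m → ℤ)
    (hg : GoodW m w') :
    ∑ p : Fin (m+1) × Bool,
      (if pr (negW (Fin.insertNth (α := fun _ => ℤ) p.1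
            (if p.2 then ((m:ℤ)+1) else -((m:ℤ)+1)) w'))
        then (X:ℝ[X]) ^ descW (Fin.insertNth (α := fun _ => ℤ) p.1
            (if p.2 then ((m:ℤ)+1) else -((m:ℤ)+1)) w')
        else 0)
    = (if pr (negW w')
        then (((descW w' + 1) : ℕ) • (X:ℝ[X])^(descW w')
          + (m - descW w') • (X:ℝ[X])^(descW w' + 1)) else 0)
      + (if pr (negW w' + 1)
        then ((descW w' : ℕ) • (X:ℝ[X])^(descW w')
          + (m + 1 - descW w') • (X:ℝ[X])^(descW w' + 1)) else 0) := by
  have hbig : ∀ x ∈ (0:ℤ) :: List.ofFn w', x < (m:ℤ)+1 := by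
    intro x hx
    rcases List.mem_cons.1 hx with h | h
    · omega
    · obtain ⟨i, rfl⟩ := List.mem_ofFn.1 h
      have := hg.1 i
      omega
  have hsmall : ∀ x ∈ (0:ℤ) :: List.ofFn w', -((m:ℤ)+1) < x := by
    intro x hx
    rcases List.mem_cons.1 hx with h | h
    · omega
    · obtain ⟨i, rfl⟩ := List.mem_ofFn.1 h
      have := hg.1 i
      omega
  rw [Fintype.sum_prod_type_right, Fintype.sum_bool]
  have e1 : ∀ g : Fin (m+1),
      negW (Fin.insertNth (α := fun _ => ℤ) g ((m:ℤ)+1) w') = negW w' := by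
    intro g; rw [negW_insertNth, if_neg (by omega)]; omega
  have e2 : ∀ g : Fin (m+1),
      negW (Fin.insertNth (α := fun _ => ℤ) g (-((m:ℤ)+1)) w') = negW w' + 1 := by
    intro g; rw [negW_insertNth]; rw [if_pos (by omega)]
  simp only [if_true, if_false, Bool.false_eq_true, e1, e2, descW_insertNth]
  have hlen : (List.ofFn w').length = m := List.length_ofFn
  have hbigsum := sum_insert_big (List.ofFn w') 0 ((m:ℤ)+1) hbig
  have hsmallsum := sum_insert_small (List.ofFn w') 0 (-((m:ℤ)+1)) hsmall
  rw [hlen] at hbigsum hsmallsum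
  have hd : descCount ((0:ℤ) :: List.ofFn w') = descW w' := rfl
  rw [hd] at hbigsum hsmallsum
  congr 1
  · by_cases hc : pr (negW w')
    · simp only [if_pos hc]
      rw [← hbigsum, ← Fin.sum_univ_eq_sum_range
        (fun g => (X:ℝ[X]) ^ descCount ((0:ℤ) :: (List.ofFn w').insertIdx g ((m:ℤ)+1)))]
    · simp only [if_neg hc, Finset.sum_const_zero]
  · by_cases hc : pr (negW w' + 1)
    · simp only [if_pos hc]
      rw [← hsmallsum, ← Fin.sum_univ_eq_sum_range
        (fun g => (X:ℝ[X]) ^ descCount ((0:ℤ) :: (List.ofFn w').insertIdx g (-((m:ℤ)+1))))]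
    · simp only [if_neg hc, Finset.sum_const_zero]

theorem S_succ (m : ℕ) (pr : ℕ → Prop) [DecidablePred pr] :
    ∑ w ∈ (WFinset (m+1)).filter (fun w => pr (negW w)), (X:ℝ[X]) ^ descW w
    = (∑ w ∈ (WFinset m).filter (fun w => pr (negW w)), (X:ℝ[X])^(descW w))
      + X * derivative (∑ w ∈ (WFinset m).filter (fun w => pr (negW w)), (X:ℝ[X])^(descW w))
      + C (m:ℝ) * X * (∑ w ∈ (WFinset m).filter (fun w => pr (negW w)), (X:ℝ[X])^(descW w))
      - X^2 * derivative (∑ w ∈ (WFinset m).filter (fun w => pr (negW w)), (X:ℝ[X])^(descW w))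
      + X * derivative (∑ w ∈ (WFinset m).filter (fun w => pr (negW w + 1)), (X:ℝ[X])^(descW w))
      + (C (m:ℝ) + 1) * X
          * (∑ w ∈ (WFinset m).filter (fun w => pr (negW w + 1)), (X:ℝ[X])^(descW w))
      - X^2 * derivative
          (∑ w ∈ (WFinset m).filter (fun w => pr (negW w + 1)), (X:ℝ[X])^(descW w)) := by
  rw [Finset.sum_filter, sum_words_succ m
    (fun w => if pr (negW w) then (X:ℝ[X]) ^ descW w else 0), Finset.sum_product]
  have hcong : ∀ w' ∈ WFinset m,
      (∑ p : Fin (m+1) × Bool,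
        (if pr (negW (Fin.insertNth (α := fun _ => ℤ) p.1
              (if p.2 then ((m:ℤ)+1) else -((m:ℤ)+1)) w'))
          then (X:ℝ[X]) ^ descW (Fin.insertNth (α := fun _ => ℤ) p.1
              (if p.2 then ((m:ℤ)+1) else -((m:ℤ)+1)) w')
          else 0))
      = (if pr (negW w')
          then (((descW w' + 1) : ℕ) • (X:ℝ[X])^(descW w')
            + (m - descW w') • (X:ℝ[X])^(descW w' + 1)) else 0)
        + (if pr (negW w' + 1)
          then ((descW w' : ℕ) • (X:ℝ[X])^(descW w')
            + (m + 1 - descW w') • (X:ℝ[X])^(descW w' + 1)) else 0) :=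
    fun w' hw' => myInnerSum m pr w' (mem_WFinset.1 hw')
  rw [Finset.sum_congr rfl hcong, Finset.sum_add_distrib,
    ← Finset.sum_filter, ← Finset.sum_filter, sum_term_big, sum_term_small]
  ring

end Recurrence

section Final
open Polynomial

theorem negW_zero (w : Fin 0 → ℤ) : negW w = 0 := by
  rw [negW]
  simp

theorem WFinset_zero : WFinset 0 = {fun i => i.elim0} := by
  ext w
  rw [mem_WFinset]
  simp only [Finset.mem_singleton]
  constructor
  · intro _
    funext i
    exact i.elim0
  · intro _
    exact ⟨fun i => i.elim0, fun i => i.elim0⟩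

theorem SDt_zero : SDt 0 = 0 := by
  rw [SDt]
  rw [Finset.filter_false_of_mem (fun w _ => by simp [negW_zero])]
  simp

theorem SD_zero : SD 0 = 1 := by
  rw [SD]
  rw [Finset.filter_true_of_mem (fun w _ => by simp [negW_zero]), WFinset_zero]
  rw [Finset.sum_singleton]
  have : descW (fun i : Fin 0 => i.elim0) = 0 := rfl
  rw [this, pow_zero]

theorem SDt_succ (m : ℕ) :
    SDt (m+1) = SDt m + X * derivative (SDt m) + C (m:ℝ) * X * SDt m
      - X^2 * derivative (SDt m) + X * derivative (SD m) + (C (m:ℝ) + 1) * X * SD m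
      - X^2 * derivative (SD m) := by
  have h := S_succ m (fun k => ¬ Even k)
  have hfc : (WFinset m).filter (fun w => ¬ Even (negW w + 1))
      = (WFinset m).filter (fun w => Even (negW w)) := by
    apply Finset.filter_congr
    intro w _
    simp [Nat.even_add_one]
  rw [hfc] at h
  rw [SDt, SDt, SD]
  exact h

theorem SD_succ (m : ℕ) :
    SD (m+1) = SD m + X * derivative (SD m) + C (m:ℝ) * X * SD m
      - X^2 * derivative (SD m) + X * derivative (SDt m) + (C (m:ℝ) + 1) * X * SDt m
      - X^2 * derivative (SDt m) := by
  have h := S_succ m (fun k => Even k)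
  have hfc : (WFinset m).filter (fun w => Even (negW w + 1))
      = (WFinset m).filter (fun w => ¬ Even (negW w)) := by
    apply Finset.filter_congr
    intro w _
    simp [Nat.even_add_one]
  rw [hfc] at h
  rw [SD, SD, SDt]
  exact h

theorem SD_sub_SDt : ∀ n : ℕ, SD n - SDt n = (1 - X) ^ n
  | 0 => by rw [SD_zero, SDt_zero, pow_zero, sub_zero]
  | m+1 => by
    have ih := SD_sub_SDt m
    rw [SD_succ, SDt_succ]
    have hp : ((1:ℝ[X]) - X) ^ (m+1) = (1 - X) ^ m * (1 - X) := pow_succ _ _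
    rw [hp]
    linear_combination (1 + C (m:ℝ) * X - (C (m:ℝ) + 1) * X) * ih

theorem pow_pred_aux (m : ℕ) :
    C (m:ℝ) * ((1:ℝ[X]) - X) ^ (m-1) * (1 - X) = C (m:ℝ) * (1 - X) ^ m := by
  cases m with
  | zero => simp
  | succ e =>
    have : e + 1 - 1 = e := rfl
    rw [this, pow_succ]
    ring

theorem SDt_main (m : ℕ) :
    SDt (m+1) = (C (2 * ((m:ℝ)+1)) * X - X + 1) * SDt m
      + 2 * X * (1 - X) * derivative (SDt m) + X * (1 - X) ^ m := by
  have hS : SD m = SDt m + (1 - X) ^ m := by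
    have := SD_sub_SDt m
    linear_combination this
  have hD : derivative (SD m) = derivative (SDt m) + C (m:ℝ) * (1-X)^(m-1) * (-1) := by
    rw [hS, derivative_add, derivative_pow]
    congr 2
    rw [derivative_sub, derivative_one, derivative_X]
    ring
  have hpow := pow_pred_aux m
  rw [SDt_succ, hD, hS]
  simp only [map_mul, map_add, map_one, map_ofNat]
  linear_combination (-X) * hpow
end Final

open Polynomial in
theorem stmt16 (n : ℕ) (hn : 1 ≤ n) :
    polyDtP n = (C (2 * (n : ℝ)) * X - X + 1) * polyDtP (n - 1)
      + 2 * X * (1 - X) * derivative (polyDtP (n - 1))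
      + X * (1 - X) ^ (n - 1) := by
  obtain ⟨m, rfl⟩ : ∃ m, n = m + 1 := ⟨n - 1, by omega⟩
  have hm : m + 1 - 1 = m := rfl
  rw [hm, polyDtP_eq_SDt, polyDtP_eq_SDt]
  have := SDt_main m
  push_cast at this ⊢
  exact this
end
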